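/- If φ is mixing with respect to a finite invariant measure μ and {C_i}_{i∈I} is a nontrivial finite partition of X (each cell of positive μ-measure), then the stochastic matrix W with entries W_{i,j} := P_*[φ^{-1}(C_j) | C_i] defines an ergodic (irreducible, aperiodic) Markov chain whose unique stationary distribution is π_i = P_*[C_i]. -/

import Mathlib

open MeasureTheory Filter Set Topology

/-- Strict triangle inequality for a sum containing terms of both signs. -/
lemma aux_abs_sum_lt_sum_abs {I : Type*} [Fintype I] [DecidableEq I] (f : I → ℝ)
    (a b : I) (hab : a ≠ b) (ha : 0 < f a) (hb : f b < 0) :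
    |∑ i, f i| < ∑ i, |f i| := by
  classical
  have hbmem : b ∈ Finset.univ.erase a :=
    Finset.mem_erase.mpr ⟨hab.symm, Finset.mem_univ b⟩
  have h1 : ∑ i, f i = f a + (f b + ∑ i ∈ (Finset.univ.erase a).erase b, f i) := by
    rw [Finset.add_sum_erase _ f hbmem, Finset.add_sum_erase _ f (Finset.mem_univ a)]
  have h2 : ∑ i, |f i| = |f a| + (|f b| + ∑ i ∈ (Finset.univ.erase a).erase b, |f i|) := by
    rw [Finset.add_sum_erase _ (fun i => |f i|) hbmem,
      Finset.add_sum_erase _ (fun i => |f i|) (Finset.mem_univ a)]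
  have hkey : |f a + f b| < |f a| + |f b| := by
    rw [abs_of_pos ha, abs_of_neg hb]
    refine abs_lt.mpr ⟨by linarith, by linarith⟩
  have htri : |∑ i ∈ (Finset.univ.erase a).erase b, f i|
      ≤ ∑ i ∈ (Finset.univ.erase a).erase b, |f i| := Finset.abs_sum_le_sum_abs _ _
  calc |∑ i, f i| = |(f a + f b) + ∑ i ∈ (Finset.univ.erase a).erase b, f i| := by
        rw [h1]; ring_nf
    _ ≤ |f a + f b| + |∑ i ∈ (Finset.univ.erase a).erase b, f i| := abs_add_le _ _
    _ < |f a| + |f b| + ∑ i ∈ (Finset.univ.erase a).erase b, |f i| := by linarith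
    _ = ∑ i, |f i| := by rw [h2]; ring

/-- Summing the measure of the pieces of a set cut by a finite measurable partition. -/
lemma aux_partition_sum {X : Type*} [MeasurableSpace X] {I : Type*} [Fintype I]
    (μ : Measure X) [IsFiniteMeasure μ]
    (D : I → Set X) (hDmeas : ∀ i, MeasurableSet (D i))
    (hDdisj : Pairwise (Function.onFun Disjoint D)) (hDcover : ⋃ i, D i = Set.univ)
    (A : Set X) (hA : MeasurableSet A) :
    ∑ i, (μ (A ∩ D i)).toReal = (μ A).toReal := by
  classical
  have hdisj' : Pairwise (Function.onFun Disjoint fun i => A ∩ D i) := by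
    intro i j hij
    exact Set.disjoint_of_subset inter_subset_right inter_subset_right (hDdisj hij)
  have hmeas' : ∀ i, MeasurableSet (A ∩ D i) := fun i => hA.inter (hDmeas i)
  have hU : ⋃ i, (A ∩ D i) = A := by
    rw [← Set.inter_iUnion, hDcover, Set.inter_univ]
  have h := measure_iUnion hdisj' hmeas' (μ := μ)
  rw [hU, tsum_fintype] at h
  rw [h, ENNReal.toReal_sum (fun i _ => measure_ne_top μ _)]

theorem approximating_chain_ergodic
    {X : Type*} [MeasurableSpace X] {I : Type*} [Fintype I] [DecidableEq I]
    (μ : Measure X) [IsFiniteMeasure μ]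
    (φ : X → X) (hφ : MeasurePreserving φ μ μ)
    (hmix : ∀ A B : Set X, MeasurableSet A → MeasurableSet B →
      Tendsto (fun n => (μ (φ^[n] ⁻¹' A ∩ B)).toReal) atTop
        (𝓝 ((μ A).toReal / (μ Set.univ).toReal * (μ B).toReal)))
    (C : I → Set X) (hmeas : ∀ i, MeasurableSet (C i))
    (hdisj : Pairwise (Function.onFun Disjoint C)) (hcover : ⋃ i, C i = Set.univ)
    (hpos : ∀ i, 0 < μ (C i))
    (W : Matrix I I ℝ)
    (hW : ∀ i j, W i j = (μ (φ ⁻¹' (C j) ∩ C i)).toReal / (μ (C i)).toReal)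
    (π : I → ℝ) (hπ : ∀ i, π i = (μ (C i)).toReal / (μ Set.univ).toReal) :
    (∀ i j, ∃ N : ℕ, ∀ n ≥ N, 0 < (W ^ n) i j) ∧
    (∀ j, ∑ i, π i * W i j = π j) ∧
    (∀ π' : I → ℝ, (∀ i, 0 ≤ π' i) → ∑ i, π' i = 1 →
      (∀ j, ∑ i, π' i * W i j = π' j) → π' = π) := by
  classical
  have hCfin : ∀ s : Set X, μ s ≠ ⊤ := fun s => measure_ne_top μ s
  have hCpos : ∀ i, 0 < (μ (C i)).toReal :=
    fun i => ENNReal.toReal_pos (hpos i).ne' (hCfin _)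
  have hWnn : ∀ i j, 0 ≤ W i j := by
    intro i j; rw [hW]
    exact div_nonneg ENNReal.toReal_nonneg ENNReal.toReal_nonneg
  -- the preimage partition
  have hDmeas : ∀ k, MeasurableSet (φ ⁻¹' C k) := fun k => (hmeas k).preimage hφ.measurable
  have hDdisj : Pairwise (Function.onFun Disjoint fun k => φ ⁻¹' C k) :=
    fun k l hkl => (hdisj hkl).preimage φ
  have hDcover : ⋃ k, φ ⁻¹' C k = Set.univ := by
    rw [← Set.preimage_iUnion, hcover, Set.preimage_univ]
  -- row sums of W equal 1
  have hrow : ∀ i, ∑ j, W i j = 1 := by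
    intro i
    have h := aux_partition_sum μ (fun k => φ ⁻¹' C k) hDmeas hDdisj hDcover (C i) (hmeas i)
    have h2 : ∑ j, W i j = (∑ j, (μ (C i ∩ φ ⁻¹' C j)).toReal) / (μ (C i)).toReal := by
      rw [Finset.sum_div]
      refine Finset.sum_congr rfl fun j _ => ?_
      rw [hW, Set.inter_comm]
    rw [h2, h, div_self (hCpos i).ne']
  -- entries of powers are nonnegative
  have hWnpow : ∀ n i j, 0 ≤ (W ^ n) i j := by
    intro n
    induction n with
    | zero => intro i j; simp [Matrix.one_apply]; split <;> norm_num
    | succ n ih =>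
      intro i j
      rw [pow_succ', Matrix.mul_apply]
      exact Finset.sum_nonneg fun k _ => mul_nonneg (hWnn i k) (ih k j)
  -- row sums of powers equal 1
  have hrowpow : ∀ n i, ∑ j, (W ^ n) i j = 1 := by
    intro n
    induction n with
    | zero => intro i; simp [Matrix.one_apply]
    | succ n ih =>
      intro i
      have : ∑ j, (W ^ (n+1)) i j = ∑ j, ∑ k, (W ^ n) i k * W k j := by
        refine Finset.sum_congr rfl fun j _ => ?_
        rw [pow_succ, Matrix.mul_apply]
      rw [this, Finset.sum_comm]
      have : ∀ k, ∑ j, (W ^ n) i k * W k j = (W ^ n) i k := by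
        intro k; rw [← Finset.mul_sum, hrow k, mul_one]
      rw [Finset.sum_congr rfl fun k _ => this k, ih i]
  -- key positivity lemma: positive joint measure implies positive matrix power entry
  have key : ∀ n, ∀ i j, 0 < (μ (φ^[n] ⁻¹' C j ∩ C i)).toReal → 0 < (W ^ n) i j := by
    intro n
    induction n with
    | zero =>
      intro i j h
      simp only [Function.iterate_zero, Set.preimage_id, Set.preimage_id'] at h
      have hij : j = i := by
        by_contra hne
        rw [Set.disjoint_iff_inter_eq_empty.mp (hdisj hne)] at h
        simp at h
      subst hij
      simp [Matrix.one_apply]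
    | succ n ih =>
      intro i j h
      set A := φ^[n+1] ⁻¹' C j ∩ C i with hA
      have hAmeas : MeasurableSet A :=
        ((hmeas j).preimage (hφ.measurable.iterate (n+1))).inter (hmeas i)
      have hdecomp := aux_partition_sum μ (fun k => φ ⁻¹' C k) hDmeas hDdisj hDcover A hAmeas
      obtain ⟨k, hk⟩ : ∃ k, 0 < (μ (A ∩ φ ⁻¹' C k)).toReal := by
        by_contra hcon
        push_neg at hcon
        have : ∑ k, (μ (A ∩ φ ⁻¹' C k)).toReal ≤ 0 :=
          Finset.sum_nonpos fun k _ => hcon k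
        rw [hdecomp] at this
        linarith
      -- W i k > 0
      have hWik : 0 < W i k := by
        have hsub : A ∩ φ ⁻¹' C k ⊆ φ ⁻¹' C k ∩ C i := by
          intro x hx
          exact ⟨hx.2, hx.1.2⟩
        have : 0 < (μ (φ ⁻¹' C k ∩ C i)).toReal :=
          lt_of_lt_of_le hk (ENNReal.toReal_mono (hCfin _) (measure_mono hsub))
        rw [hW]
        exact div_pos this (hCpos i)
      -- (W^n) k j > 0
      have hWkj : 0 < (W ^ n) k j := by
        apply ih
        have hsub : A ∩ φ ⁻¹' C k ⊆ φ ⁻¹' (φ^[n] ⁻¹' C j ∩ C k) := by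
          intro x hx
          have h1 : x ∈ φ^[n+1] ⁻¹' C j := hx.1.1
          rw [Function.iterate_succ, Set.preimage_comp] at h1
          exact ⟨h1, hx.2⟩
        have hm : μ (φ ⁻¹' (φ^[n] ⁻¹' C j ∩ C k)) = μ (φ^[n] ⁻¹' C j ∩ C k) :=
          hφ.measure_preimage
            (((hmeas j).preimage (hφ.measurable.iterate n)).inter (hmeas k)).nullMeasurableSet
        have : 0 < (μ (φ ⁻¹' (φ^[n] ⁻¹' C j ∩ C k))).toReal :=
          lt_of_lt_of_le hk (ENNReal.toReal_mono (hCfin _) (measure_mono hsub))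
        rwa [hm] at this
      rw [pow_succ', Matrix.mul_apply]
      have hle : W i k * (W ^ n) k j ≤ ∑ m, W i m * (W ^ n) m j :=
        Finset.single_le_sum (fun m _ => mul_nonneg (hWnn i m) (hWnpow n m j))
          (Finset.mem_univ k)
      exact lt_of_lt_of_le (mul_pos hWik hWkj) hle
  -- Part 1
  have part1 : ∀ i j, ∃ N : ℕ, ∀ n ≥ N, 0 < (W ^ n) i j := by
    intro i j
    have hXpos : 0 < (μ Set.univ).toReal := by
      refine ENNReal.toReal_pos ?_ (hCfin _)
      exact (lt_of_lt_of_le (hpos i) (measure_mono (Set.subset_univ _))).ne'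
    have hL : 0 < (μ (C j)).toReal / (μ Set.univ).toReal * (μ (C i)).toReal :=
      mul_pos (div_pos (hCpos j) hXpos) (hCpos i)
    have hev := (hmix (C j) (C i) (hmeas j) (hmeas i)).eventually (eventually_gt_nhds hL)
    obtain ⟨N, hN⟩ := Filter.eventually_atTop.mp hev
    exact ⟨N, fun n hn => key n i j (hN n hn)⟩
  -- Part 2
  have part2 : ∀ j, ∑ i, π i * W i j = π j := by
    intro j
    have hterm : ∀ i, π i * W i j = (μ (φ ⁻¹' C j ∩ C i)).toReal / (μ Set.univ).toReal := by
      intro i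
      have h1 : (μ (C i)).toReal ≠ 0 := (hCpos i).ne'
      rw [hπ, hW]
      field_simp
    rw [Finset.sum_congr rfl fun i _ => hterm i, ← Finset.sum_div,
      aux_partition_sum μ C hmeas hdisj hcover (φ ⁻¹' C j) (hDmeas j),
      hφ.measure_preimage (hmeas j).nullMeasurableSet, hπ]
  -- stationarity under powers
  have stat_pow : ∀ (p : I → ℝ), (∀ j, ∑ i, p i * W i j = p j) →
      ∀ n j, ∑ i, p i * (W ^ n) i j = p j := by
    intro p hp n
    induction n with
    | zero => intro j; simp [Matrix.one_apply]
    | succ n ih =>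
      intro j
      have h1 : ∑ i, p i * (W ^ (n+1)) i j = ∑ i, ∑ k, p i * ((W ^ n) i k * W k j) := by
        refine Finset.sum_congr rfl fun i _ => ?_
        rw [pow_succ, Matrix.mul_apply, Finset.mul_sum]
      rw [h1, Finset.sum_comm]
      have h2 : ∀ k, ∑ i, p i * ((W ^ n) i k * W k j) = p k * W k j := by
        intro k
        have : ∑ i, p i * ((W ^ n) i k * W k j) = (∑ i, p i * (W ^ n) i k) * W k j := by
          rw [Finset.sum_mul]; exact Finset.sum_congr rfl fun i _ => by ring
        rw [this, ih k]
      rw [Finset.sum_congr rfl fun k _ => h2 k, hp j]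
  -- Part 3
  have part3 : ∀ π' : I → ℝ, (∀ i, 0 ≤ π' i) → ∑ i, π' i = 1 →
      (∀ j, ∑ i, π' i * W i j = π' j) → π' = π := by
    intro π' hπ'nn hπ'sum hπ'stat
    have hI : Nonempty I := by
      by_contra hempty
      rw [not_nonempty_iff] at hempty
      rw [Finset.univ_eq_empty, Finset.sum_empty] at hπ'sum
      norm_num at hπ'sum
    have hXpos : 0 < (μ Set.univ).toReal := by
      obtain ⟨i⟩ := hI
      refine ENNReal.toReal_pos ?_ (hCfin _)
      exact (lt_of_lt_of_le (hpos i) (measure_mono (Set.subset_univ _))).ne'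
    have hπsum : ∑ i, π i = 1 := by
      have : ∑ i, π i = (∑ i, (μ (C i)).toReal) / (μ Set.univ).toReal := by
        rw [Finset.sum_div]
        exact Finset.sum_congr rfl fun i _ => hπ i
      have hps := aux_partition_sum μ C hmeas hdisj hcover Set.univ MeasurableSet.univ
      simp only [Set.univ_inter] at hps
      rw [this, hps, div_self hXpos.ne']
    -- choose a power with all entries positive
    obtain ⟨Nf, hNf⟩ : ∃ Nf : I × I → ℕ, ∀ p : I × I, ∀ n ≥ Nf p, 0 < (W ^ n) p.1 p.2 :=
      ⟨fun p => Classical.choose (part1 p.1 p.2),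
        fun p => Classical.choose_spec (part1 p.1 p.2)⟩
    set n₀ : ℕ := Finset.univ.sup Nf with hn₀
    have hMpos : ∀ i j, 0 < (W ^ n₀) i j := by
      intro i j
      exact hNf (i, j) n₀ (Finset.le_sup (Finset.mem_univ (i, j)))
    set M : Matrix I I ℝ := W ^ n₀ with hM
    set v : I → ℝ := fun i => π' i - π i with hv
    have hvstat : ∀ j, ∑ i, v i * M i j = v j := by
      intro j
      have h1 := stat_pow π' hπ'stat n₀ j
      have h2 := stat_pow π part2 n₀ j
      have : ∑ i, v i * M i j = ∑ i, π' i * M i j - ∑ i, π i * M i j := by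
        rw [← Finset.sum_sub_distrib]
        exact Finset.sum_congr rfl fun i _ => by simp [hv]; ring
      rw [this, h1, h2]
    have hvsum : ∑ i, v i = 0 := by
      simp only [hv, Finset.sum_sub_distrib, hπ'sum, hπsum, sub_self]
    by_contra hcon
    have hcon' : ∃ j₀, v j₀ ≠ 0 := by
      by_contra hall
      push_neg at hall
      exact hcon (funext fun i => by have := hall i; simp [hv] at this; linarith)
    obtain ⟨j₀, hj₀⟩ := hcon'
    have hexpos : ∃ a, 0 < v a := by
      by_contra hno
      push_neg at hno
      have hlt : ∑ i, v i < ∑ _i : I, (0 : ℝ) := by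
        refine Finset.sum_lt_sum (fun i _ => hno i) ⟨j₀, Finset.mem_univ j₀, ?_⟩
        exact lt_of_le_of_ne (hno j₀) hj₀
      simp [hvsum] at hlt
    have hexneg : ∃ b, v b < 0 := by
      by_contra hno
      push_neg at hno
      have hlt : ∑ _i : I, (0 : ℝ) < ∑ i, v i := by
        refine Finset.sum_lt_sum (fun i _ => hno i) ⟨j₀, Finset.mem_univ j₀, ?_⟩
        exact lt_of_le_of_ne (hno j₀) (Ne.symm hj₀)
      simp [hvsum] at hlt
    obtain ⟨a, hva⟩ := hexpos
    obtain ⟨b, hvb⟩ := hexneg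
    have hab : a ≠ b := fun h => by rw [h] at hva; linarith
    have hstrict : ∀ j, |v j| < ∑ i, |v i| * M i j := by
      intro j
      have habs := aux_abs_sum_lt_sum_abs (fun i => v i * M i j) a b hab
        (mul_pos hva (hMpos a j)) (mul_neg_of_neg_of_pos hvb (hMpos b j))
      rw [hvstat j] at habs
      have : ∑ i, |v i * M i j| = ∑ i, |v i| * M i j := by
        refine Finset.sum_congr rfl fun i _ => ?_
        rw [abs_mul, abs_of_pos (hMpos i j)]
      rwa [this] at habs
    have hfinal : ∑ j, |v j| < ∑ i, |v i| := by
      calc ∑ j, |v j| < ∑ j, ∑ i, |v i| * M i j :=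
            Finset.sum_lt_sum_of_nonempty Finset.univ_nonempty (fun j _ => hstrict j)
        _ = ∑ i, ∑ j, |v i| * M i j := Finset.sum_comm
        _ = ∑ i, |v i| := by
            refine Finset.sum_congr rfl fun i _ => ?_
            rw [← Finset.mul_sum, hrowpow n₀ i, mul_one]
    exact absurd hfinal (lt_irrefl _)
  exact ⟨part1, part2, part3⟩
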